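/- Let Q' be a natural number and f : ℕ → ℚ. Suppose that for every s with 0 ≤ s ≤ Q', the sum over S from s to Q' of f(S)·C(S,s)·(Q' − S·(s+2)/(s+1) + s/(s+1)) equals 0. Then f(0) = f(1) = ··· = f(Q'), i.e. f is constant on {0, 1, ..., Q'}. -/

import Mathlib

open Finset

lemma key_identity (s : ℕ) : ∀ Q' : ℕ, s ≤ Q' →
    ∑ S ∈ Finset.Icc s Q',
      (Nat.choose S s : ℚ) *
        ((Q' : ℚ) - (S : ℚ) * ((s : ℚ) + 2) / ((s : ℚ) + 1) + (s : ℚ) / ((s : ℚ) + 1)) = 0 := by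
  intro Q' hQ
  have hs1 : ((s : ℚ) + 1) ≠ 0 := by positivity
  induction Q', hQ using Nat.le_induction with
  | base =>
    rw [Finset.Icc_self, Finset.sum_singleton, Nat.choose_self]
    push_cast
    field_simp
    ring
  | succ n hn ih =>
    rw [Finset.sum_Icc_succ_top (by omega)]
    have split : ∀ S : ℕ,
        (Nat.choose S s : ℚ) *
          (((n : ℚ) + 1) - (S : ℚ) * ((s : ℚ) + 2) / ((s : ℚ) + 1) + (s : ℚ) / ((s : ℚ) + 1))
        = (Nat.choose S s : ℚ) *
          ((n : ℚ) - (S : ℚ) * ((s : ℚ) + 2) / ((s : ℚ) + 1) + (s : ℚ) / ((s : ℚ) + 1))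
          + (Nat.choose S s : ℚ) := by
      intro S; ring
    have hsum : ∑ S ∈ Finset.Icc s n, (Nat.choose S s : ℚ) = (Nat.choose (n + 1) (s + 1) : ℚ) := by
      rw [← Nat.cast_sum]
      norm_cast
      exact Nat.sum_Icc_choose n s
    have hchoose : (Nat.choose (n + 1) (s + 1) : ℚ) * ((s : ℚ) + 1)
        = (Nat.choose (n + 1) s : ℚ) * ((n : ℚ) + 1 - (s : ℚ)) := by
      have h1 := Nat.choose_succ_right_eq (n + 1) s
      have h2 : ((n + 1 - s : ℕ) : ℚ) = (n : ℚ) + 1 - (s : ℚ) := by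
        push_cast [Nat.cast_sub (by omega : s ≤ n + 1)]; ring
      calc (Nat.choose (n + 1) (s + 1) : ℚ) * ((s : ℚ) + 1)
          = ((Nat.choose (n + 1) (s + 1) * (s + 1) : ℕ) : ℚ) := by push_cast; ring
        _ = ((Nat.choose (n + 1) s * (n + 1 - s) : ℕ) : ℚ) := by rw [h1]
        _ = (Nat.choose (n + 1) s : ℚ) * ((n : ℚ) + 1 - (s : ℚ)) := by
            push_cast [Nat.cast_sub (by omega : s ≤ n + 1)]; ring
    push_cast
    push_cast at ih hsum
    calc (∑ S ∈ Finset.Icc s n, (Nat.choose S s : ℚ) *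
            (((n : ℚ) + 1) - (S : ℚ) * ((s : ℚ) + 2) / ((s : ℚ) + 1) + (s : ℚ) / ((s : ℚ) + 1)))
          + (Nat.choose (n + 1) s : ℚ) *
            (((n : ℚ) + 1) - ((n : ℚ) + 1) * ((s : ℚ) + 2) / ((s : ℚ) + 1) + (s : ℚ) / ((s : ℚ) + 1))
        = (∑ S ∈ Finset.Icc s n, ((Nat.choose S s : ℚ) *
            ((n : ℚ) - (S : ℚ) * ((s : ℚ) + 2) / ((s : ℚ) + 1) + (s : ℚ) / ((s : ℚ) + 1))
            + (Nat.choose S s : ℚ)))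
          + (Nat.choose (n + 1) s : ℚ) *
            (((n : ℚ) + 1) - ((n : ℚ) + 1) * ((s : ℚ) + 2) / ((s : ℚ) + 1) + (s : ℚ) / ((s : ℚ) + 1)) := by
          congr 1; exact Finset.sum_congr rfl fun S _ => split S
      _ = 0 + (Nat.choose (n + 1) (s + 1) : ℚ)
          + (Nat.choose (n + 1) s : ℚ) *
            (((n : ℚ) + 1) - ((n : ℚ) + 1) * ((s : ℚ) + 2) / ((s : ℚ) + 1) + (s : ℚ) / ((s : ℚ) + 1)) := by
          rw [Finset.sum_add_distrib, ih, hsum]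
      _ = 0 := by
          field_simp
          linear_combination hchoose

/-- Theorem 2 of the paper: if for every `s ≤ Q'` the sum
`∑_{S=s}^{Q'} f(S)·C(S,s)·(Q' − S·(s+2)/(s+1) + s/(s+1))` vanishes,
then `f` is constant on `{0, 1, …, Q'}`. -/
theorem stmt_1 (Q' : ℕ) (f : ℕ → ℚ)
    (h : ∀ s : ℕ, s ≤ Q' →
      ∑ S ∈ Finset.Icc s Q',
        f S * (Nat.choose S s : ℚ) *
          ((Q' : ℚ) - (S : ℚ) * ((s : ℚ) + 2) / ((s : ℚ) + 1) + (s : ℚ) / ((s : ℚ) + 1)) = 0) :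
    ∀ i : ℕ, i ≤ Q' → ∀ j : ℕ, j ≤ Q' → f i = f j := by
  have main : ∀ k : ℕ, ∀ s : ℕ, s ≤ Q' → Q' - s ≤ k → f s = f Q' := by
    intro k
    induction k with
    | zero => exact fun s hs hk => congrArg f (by omega : s = Q')
    | succ k ih =>
      intro s hs hk
      rcases eq_or_lt_of_le hs with heq | hlt
      · rw [heq]
      have hs1 : ((s : ℚ) + 1) ≠ 0 := by positivity
      have h1 := h s hs
      have h2 := key_identity s Q' hs
      set w : ℕ → ℚ := fun S =>
        (Q' : ℚ) - (S : ℚ) * ((s : ℚ) + 2) / ((s : ℚ) + 1) + (s : ℚ) / ((s : ℚ) + 1) with hw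
      have h3 : ∑ S ∈ Finset.Icc s Q', (f S - f Q') * (Nat.choose S s : ℚ) * w S = 0 := by
        have : ∑ S ∈ Finset.Icc s Q', (f S - f Q') * (Nat.choose S s : ℚ) * w S
            = (∑ S ∈ Finset.Icc s Q', f S * (Nat.choose S s : ℚ) * w S)
              - f Q' * ∑ S ∈ Finset.Icc s Q', (Nat.choose S s : ℚ) * w S := by
          rw [Finset.mul_sum, ← Finset.sum_sub_distrib]
          exact Finset.sum_congr rfl fun S _ => by ring
        rw [this, h1, h2]; ring
      have hins : Finset.Icc s Q' = insert s (Finset.Icc (s + 1) Q') := by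
        ext x; simp only [Finset.mem_Icc, Finset.mem_insert]; omega
      rw [hins, Finset.sum_insert (by simp)] at h3
      have hrest : ∑ S ∈ Finset.Icc (s + 1) Q', (f S - f Q') * (Nat.choose S s : ℚ) * w S = 0 := by
        apply Finset.sum_eq_zero
        intro S hS
        simp only [Finset.mem_Icc] at hS
        have : f S = f Q' := ih S hS.2 (by omega)
        rw [this]; ring
      rw [hrest, add_zero, Nat.choose_self] at h3
      have hws : w s = (Q' : ℚ) - (s : ℚ) := by
        rw [hw]; field_simp; ring
      rw [hws] at h3
      have hne : (Q' : ℚ) - (s : ℚ) ≠ 0 := by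
        have : (s : ℚ) < (Q' : ℚ) := by exact_mod_cast hlt
        intro hc; rw [sub_eq_zero] at hc; linarith
      have : f s - f Q' = 0 := by
        rcases mul_eq_zero.mp h3 with h4 | h4
        · rcases mul_eq_zero.mp h4 with h5 | h5
          · exact h5
          · norm_num at h5
        · exact absurd h4 hne
      linarith
  intro i hi j hj
  rw [main (Q' - i) i hi le_rfl, main (Q' - j) j hj le_rfl]
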